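/- For every d there exists n₀ such that for all n ≥ n₀, the incidence poset P_n of the complete graph on n vertices has local dimension greater than d; that is, the local dimension of P_n tends to infinity as n tends to infinity. -/

import Mathlib

/-- `L` is a realizer of the order `le`: a family of linear extensions of `le`
whose intersection is `le`. -/
def IsRealizer {X : Type*} (le : X → X → Prop) {d : ℕ} (L : Fin d → X → X → Prop) : Prop :=
  (∀ i, IsLinearOrder X (L i)) ∧ (∀ (i) (x y : X), le x y → L i x y) ∧
    (∀ x y : X, le x y ↔ ∀ i, L i x y)

/-- The (Dushnik–Miller) dimension of a poset: the least size of a realizer. -/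
noncomputable def orderDim (X : Type*) [PartialOrder X] : ℕ :=
  sInf {d : ℕ | ∃ L : Fin d → X → X → Prop, IsRealizer (· ≤ ·) L}

/-- `L` together with the boolean function `φ` is a boolean realizer of `le`. -/
def IsBooleanRealizer {X : Type*} (le : X → X → Prop) {d : ℕ}
    (L : Fin d → X → X → Prop) (φ : (Fin d → Prop) → Prop) : Prop :=
  (∀ i, IsLinearOrder X (L i)) ∧ ∀ x y : X, le x y ↔ φ (fun i => L i x y)

/-- Boolean dimension of a relation. -/
noncomputable def booleanDimRel {X : Type*} (le : X → X → Prop) : ℕ :=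
  sInf {d : ℕ | ∃ (L : Fin d → X → X → Prop) (φ : (Fin d → Prop) → Prop),
    IsBooleanRealizer le L φ}

/-- Boolean dimension of a poset. -/
noncomputable def booleanDim (X : Type*) [PartialOrder X] : ℕ :=
  booleanDimRel ((· ≤ ·) : X → X → Prop)

/-- A partial linear extension of `le`: a linear order on a subset of `X`
extending the restriction of `le` to that subset. -/
structure PLE {X : Type*} (le : X → X → Prop) where
  dom : Set X
  rel : X → X → Prop
  mem_left : ∀ x y, rel x y → x ∈ dom
  mem_right : ∀ x y, rel x y → y ∈ dom
  refl : ∀ x ∈ dom, rel x x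
  antisymm : ∀ x y, rel x y → rel y x → x = y
  trans : ∀ x y z, rel x y → rel y z → rel x z
  total : ∀ x ∈ dom, ∀ y ∈ dom, rel x y ∨ rel y x
  le_imp : ∀ x ∈ dom, ∀ y ∈ dom, le x y → rel x y

/-- A family of partial linear extensions is a local realizer of `le`:
`x ≤ y` iff no member reverses the pair strictly. -/
def IsLocalRealizer {X : Type*} {le : X → X → Prop} {ι : Type*} (L : ι → PLE le) : Prop :=
  ∀ x y : X, le x y ↔ ∀ i, ¬ ((L i).rel y x ∧ y ≠ x)

/-- Every element of `X` occurs in the domain of at most `d` members of the family. -/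
def WidthAtMost {X : Type*} {le : X → X → Prop} {ι : Type*} (L : ι → PLE le) (d : ℕ) : Prop :=
  ∀ x : X, ({i : ι | x ∈ (L i).dom}).ncard ≤ d

/-- Local dimension of a poset: the least width of a local realizer. -/
noncomputable def localDim (X : Type*) [PartialOrder X] : ℕ :=
  sInf {d : ℕ | ∃ (t : ℕ) (L : Fin t → PLE ((· ≤ ·) : X → X → Prop)),
    IsLocalRealizer L ∧ WidthAtMost L d}

/-- The incidence poset `P_n` of the complete graph `K_n` as a type:
vertices (`inl`) and 2-element edge sets (`inr`). -/
def IncPoset (n : ℕ) : Type := Fin n ⊕ {s : Finset (Fin n) // s.card = 2}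

/-- Underlying order of the incidence poset: `v < e` iff `v ∈ e`. -/
def incLE (n : ℕ) : IncPoset n → IncPoset n → Prop
  | Sum.inl v, Sum.inl w => v = w
  | Sum.inl v, Sum.inr e => v ∈ e.1
  | Sum.inr e, Sum.inr f => e = f
  | Sum.inr _, Sum.inl _ => False

instance (n : ℕ) : PartialOrder (IncPoset n) where
  le := incLE n
  le_refl x := by rcases x with v | e <;> simp [incLE]
  le_trans x y z hxy hyz := by
    rcases x with v | e <;> rcases y with w | f <;> rcases z with u | g <;>
      simp_all [incLE]
  le_antisymm x y hxy hyx := by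
    rcases x with v | e <;> rcases y with w | f <;> simp_all [incLE] <;> rfl

instance (n : ℕ) : Fintype (IncPoset n) :=
  inferInstanceAs (Fintype (Fin n ⊕ {s : Finset (Fin n) // s.card = 2}))


/-- Refine a finite set so that finitely many colourings become constant on it. -/
lemma refine_many {c : ℕ} (hc : 0 < c) :
    ∀ (l M : ℕ) (S : Finset ℕ) (φ : ℕ → ℕ → ℕ), (∀ p x, φ p x < c) →
      c ^ l * M ≤ S.card →
      ∃ T : Finset ℕ, T ⊆ S ∧ M ≤ T.card ∧
        ∀ p, p < l → ∀ x ∈ T, ∀ y ∈ T, φ p x = φ p y := by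
  intro l
  induction l with
  | zero =>
    intro M S φ hφ hcard
    exact ⟨S, Finset.Subset.refl S, by simpa using hcard, by omega⟩
  | succ l ih =>
    intro M S φ hφ hcard
    have hmaps : ∀ x ∈ S, φ l x ∈ Finset.range c := by
      intro x _; exact Finset.mem_range.2 (hφ l x)
    have hne : (Finset.range c).Nonempty := ⟨0, Finset.mem_range.2 hc⟩
    have hmul : (Finset.range c).card * (c ^ l * M) ≤ S.card := by
      rw [Finset.card_range]
      calc c * (c ^ l * M) = c ^ (l + 1) * M := by ring
        _ ≤ S.card := hcard
    obtain ⟨v, -, hv⟩ :=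
      Finset.exists_le_card_fiber_of_mul_le_card_of_maps_to hmaps hne hmul
    obtain ⟨T, hTsub, hTcard, hT⟩ := ih M {x ∈ S | φ l x = v} φ hφ hv
    refine ⟨T, fun x hx => (Finset.mem_filter.1 (hTsub hx)).1, hTcard, ?_⟩
    intro p hp x hx y hy
    rcases Nat.lt_or_ge p l with h | h
    · exact hT p h x hx y hy
    · have hpl : p = l := by omega
      subst hpl
      have h1 := (Finset.mem_filter.1 (hTsub hx)).2
      have h2 := (Finset.mem_filter.1 (hTsub hy)).2
      omega


/-- Size function for the pair Ramsey lemma. -/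
def pairN (c : ℕ) : ℕ → ℕ
  | 0 => 0
  | m + 1 => c * pairN c m + 1

/-- End-homogeneous sequences for colourings of pairs. -/
lemma pair_ramsey {c : ℕ} (hc : 0 < c) :
    ∀ (m : ℕ) (S : Finset ℕ) (g : ℕ → ℕ → ℕ), (∀ x y, g x y < c) →
      pairN c m ≤ S.card →
      ∃ b : ℕ → ℕ, (∀ i, i < m → b i ∈ S) ∧
        (∀ i j, i < j → j < m → b i < b j) ∧
        (∀ i j j', i < j → j < m → i < j' → j' < m → g (b i) (b j) = g (b i) (b j')) := by
  intro m
  induction m with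
  | zero => intro S g hg _; exact ⟨fun _ => 0, by omega, by omega, by omega⟩
  | succ m ih =>
    intro S g hg hcard
    have hSne : S.Nonempty := by
      rw [← Finset.card_pos]; simp only [pairN] at hcard; omega
    set a0 := S.min' hSne with ha0
    have ha0S : a0 ∈ S := S.min'_mem hSne
    set S' := S.erase a0 with hS'
    have hS'card : c * pairN c m ≤ S'.card := by
      rw [hS', Finset.card_erase_of_mem ha0S]
      simp only [pairN] at hcard; omega
    have hmaps : ∀ x ∈ S', g a0 x ∈ Finset.range c := fun x _ => Finset.mem_range.2 (hg _ _)
    have hne : (Finset.range c).Nonempty := ⟨0, Finset.mem_range.2 hc⟩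
    obtain ⟨v, -, hv⟩ := Finset.exists_le_card_fiber_of_mul_le_card_of_maps_to hmaps hne
      (by rwa [Finset.card_range])
    obtain ⟨b, hbS, hbmono, hbEH⟩ := ih {x ∈ S' | g a0 x = v} g hg hv
    have hsubS' : ∀ i, i < m → b i ∈ S' := fun i hi => (Finset.mem_filter.1 (hbS i hi)).1
    have hgt : ∀ i, i < m → a0 < b i := by
      intro i hi
      have h1 := hsubS' i hi
      have h2 : b i ∈ S := Finset.mem_of_mem_erase h1
      have h3 : b i ≠ a0 := Finset.ne_of_mem_erase h1
      exact lt_of_le_of_ne (S.min'_le _ h2) (Ne.symm h3)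
    refine ⟨fun i => Nat.casesOn i a0 b, ?_, ?_, ?_⟩
    · intro i hi
      cases i with
      | zero => exact ha0S
      | succ i => exact Finset.mem_of_mem_erase (hsubS' i (by omega))
    · intro i j hij hj
      cases j with
      | zero => omega
      | succ j =>
        cases i with
        | zero => exact hgt j (by omega)
        | succ i => exact hbmono i j (by omega) (by omega)
    · intro i j j' hij hj hij' hj'
      cases i with
      | zero =>
        cases j with
        | zero => omega
        | succ j =>
          cases j' with
          | zero => omega
          | succ j' =>
            have e1 := (Finset.mem_filter.1 (hbS j (by omega))).2
            have e2 := (Finset.mem_filter.1 (hbS j' (by omega))).2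
            simpa using e1.trans e2.symm
      | succ i =>
        cases j with
        | zero => omega
        | succ j =>
          cases j' with
          | zero => omega
          | succ j' => exact hbEH i j j' (by omega) (by omega) (by omega) (by omega)

/-- Size function for the triple Ramsey lemma. -/
def tripN (c : ℕ) : ℕ → ℕ → ℕ
  | 0, _ => 0
  | m + 1, l => c ^ l * tripN c m (l + 1) + 1

/-- End-homogeneous sequences for colourings of triples, simultaneously
end-homogeneous for a list of auxiliary pair colourings. -/
lemma trip_ramsey {c : ℕ} (hc : 0 < c) :
    ∀ (m l : ℕ) (S : Finset ℕ) (f : ℕ → ℕ → ℕ → ℕ) (G : ℕ → ℕ → ℕ → ℕ),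
      (∀ x y z, f x y z < c) → (∀ p x y, G p x y < c) → tripN c m l ≤ S.card →
      ∃ a : ℕ → ℕ, (∀ i, i < m → a i ∈ S) ∧
        (∀ i j, i < j → j < m → a i < a j) ∧
        (∀ i j k k', i < j → j < k → k < m → j < k' → k' < m →
          f (a i) (a j) (a k) = f (a i) (a j) (a k')) ∧
        (∀ p, p < l → ∀ i j j', i < j → j < m → i < j' → j' < m →
          G p (a i) (a j) = G p (a i) (a j')) := by
  intro m
  induction m with
  | zero => intro l S f G hf hG _; exact ⟨fun _ => 0, by omega, by omega, by omega, by omega⟩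
  | succ m ih =>
    intro l S f G hf hG hcard
    have hSne : S.Nonempty := by
      rw [← Finset.card_pos]; simp only [tripN] at hcard; omega
    set a0 := S.min' hSne with ha0
    have ha0S : a0 ∈ S := S.min'_mem hSne
    set S' := S.erase a0 with hS'
    have hS'card : c ^ l * tripN c m (l + 1) ≤ S'.card := by
      rw [hS', Finset.card_erase_of_mem ha0S]
      simp only [tripN] at hcard; omega
    obtain ⟨T, hTsub, hTcard, hTconst⟩ :=
      refine_many hc l (tripN c m (l + 1)) S' (fun p x => G p a0 x) (fun p x => hG p a0 x) hS'card
    set G' : ℕ → ℕ → ℕ → ℕ := fun p x y => if p < l then G p x y else f a0 x y with hG'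
    have hG'bd : ∀ p x y, G' p x y < c := by
      intro p x y; rw [hG']; dsimp only; split <;> [exact hG _ _ _; exact hf _ _ _]
    obtain ⟨b, hbS, hbmono, hbEH, hbG⟩ := ih (l + 1) T f G' hf hG'bd hTcard
    have hsubS' : ∀ i, i < m → b i ∈ S' := fun i hi => hTsub (hbS i hi)
    have hgt : ∀ i, i < m → a0 < b i := by
      intro i hi
      have h1 := hsubS' i hi
      exact lt_of_le_of_ne (S.min'_le _ (Finset.mem_of_mem_erase h1))
        (Ne.symm (Finset.ne_of_mem_erase h1))
    refine ⟨fun i => Nat.casesOn i a0 b, ?_, ?_, ?_, ?_⟩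
    · intro i hi
      cases i with
      | zero => exact ha0S
      | succ i => exact Finset.mem_of_mem_erase (hsubS' i (by omega))
    · intro i j hij hj
      cases j with
      | zero => omega
      | succ j =>
        cases i with
        | zero => exact hgt j (by omega)
        | succ i => exact hbmono i j (by omega) (by omega)
    · intro i j k k' hij hjk hk hjk' hk'
      cases i with
      | zero =>
        cases j with
        | zero => omega
        | succ j =>
          cases k with
          | zero => omega
          | succ k =>
            cases k' with
            | zero => omega
            | succ k' =>
              have key := hbG l (by omega) j k k' (by omega) (by omega) (by omega) (by omega)
              have e : ∀ x y : ℕ, G' l x y = f a0 x y := by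
                intro x y; rw [hG']; simp
              rw [e, e] at key
              exact key
      | succ i =>
        cases j with
        | zero => omega
        | succ j =>
          cases k with
          | zero => omega
          | succ k =>
            cases k' with
            | zero => omega
            | succ k' => exact hbEH i j k k' (by omega) (by omega) (by omega) (by omega) (by omega)
    · intro p hp i j j' hij hj hij' hj'
      cases i with
      | zero =>
        cases j with
        | zero => omega
        | succ j =>
          cases j' with
          | zero => omega
          | succ j' =>
            exact hTconst p (by omega) (b j) (hbS j (by omega)) (b j') (hbS j' (by omega))
      | succ i =>
        cases j with
        | zero => omega
        | succ j =>
          cases j' with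
          | zero => omega
          | succ j' =>
            have key := hbG p (by omega) i j j' (by omega) (by omega) (by omega) (by omega)
            have e : ∀ x y : ℕ, G' p x y = G p x y := by
              intro x y; rw [hG']; simp [hp]
            rw [e, e] at key
            exact key

/-- Ramsey: a monochromatic 4-set for colourings of triples. -/
lemma mono4 {c : ℕ} (hc : 0 < c) (n : ℕ) (hn : tripN c (pairN c (c + 3)) 0 ≤ n)
    (f : ℕ → ℕ → ℕ → ℕ) (hf : ∀ x y z, f x y z < c) :
    ∃ w1 w2 w3 w4, w1 < w2 ∧ w2 < w3 ∧ w3 < w4 ∧ w4 < n ∧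
      f w1 w2 w3 = f w1 w2 w4 ∧ f w1 w2 w4 = f w1 w3 w4 ∧ f w1 w3 w4 = f w2 w3 w4 := by
  set m := pairN c (c + 3) with hm
  obtain ⟨a, haS, hamono, haEH, -⟩ :=
    trip_ramsey hc m 0 (Finset.range n) f (fun _ _ _ => 0) hf (fun _ _ _ => hc)
      (by rwa [Finset.card_range])
  set g : ℕ → ℕ → ℕ := fun i j => f (a i) (a j) (a (j + 1)) with hg
  obtain ⟨b, hbS, hbmono, hbEH⟩ := pair_ramsey hc (c + 3) (Finset.range m) g
    (fun x y => hf _ _ _) (by rw [Finset.card_range])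
  have hblt : ∀ i, i < c + 3 → b i < m := fun i hi => Finset.mem_range.1 (hbS i hi)
  -- pigeonhole on the c+1 values v 0, ..., v c
  set v : ℕ → ℕ := fun j => g (b j) (b (j + 1)) with hv
  have hpig : ∃ j1 ∈ Finset.range (c + 1), ∃ j2 ∈ Finset.range (c + 1), j1 ≠ j2 ∧ v j1 = v j2 := by
    apply Finset.exists_ne_map_eq_of_card_lt_of_maps_to (t := Finset.range c)
    · simp
    · intro j _; exact Finset.mem_range.2 (hf _ _ _)
  obtain ⟨j1, hj1, j2, hj2, hne, heq⟩ := hpig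
  rw [Finset.mem_range] at hj1 hj2
  -- wlog j1 < j2
  obtain ⟨j1, j2, hj1, hj2, hlt, heq⟩ :
      ∃ j1 j2, j1 < c + 1 ∧ j2 < c + 1 ∧ j1 < j2 ∧ v j1 = v j2 := by
    rcases Nat.lt_or_ge j1 j2 with h | h
    · exact ⟨j1, j2, hj1, hj2, h, heq⟩
    · exact ⟨j2, j1, hj2, hj1, by omega, heq.symm⟩
  set p := b j1
  set q := b j2
  set r := b (j2 + 1)
  set s := b (c + 2)
  have hpq : p < q := hbmono j1 j2 hlt (by omega)
  have hqr : q < r := hbmono j2 (j2 + 1) (by omega) (by omega)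
  have hrs : r < s := hbmono (j2 + 1) (c + 2) (by omega) (by omega)
  have hpm : p < m := hblt j1 (by omega)
  have hqm : q < m := hblt j2 (by omega)
  have hrm : r < m := hblt (j2 + 1) (by omega)
  have hsm : s < m := hblt (c + 2) (by omega)
  have A1 : f (a p) (a q) (a r) = f (a p) (a q) (a s) :=
    haEH p q r s hpq hqr hrm (hqr.trans hrs) hsm
  have A2 : f (a p) (a q) (a r) = g p q :=
    haEH p q r (q + 1) hpq hqr hrm (by omega) (by omega)
  have A3 : f (a p) (a r) (a s) = g p r :=
    haEH p r s (r + 1) (hpq.trans hqr) hrs hsm (by omega) (by omega)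
  have A4 : f (a q) (a r) (a s) = g q r :=
    haEH q r s (r + 1) hqr hrs hsm (by omega) (by omega)
  have B1 : g p q = v j1 :=
    hbEH j1 j2 (j1 + 1) hlt (by omega) (by omega) (by omega)
  have B2 : g p r = v j1 :=
    hbEH j1 (j2 + 1) (j1 + 1) (by omega) (by omega) (by omega) (by omega)
  have B3 : g q r = v j2 := rfl
  refine ⟨a p, a q, a r, a s, hamono p q hpq hqm, hamono q r hqr hrm,
    hamono r s hrs hsm, Finset.mem_range.1 (haS s hsm), A1, ?_, ?_⟩
  · rw [← A1, A2, A3, B1, B2]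
  · rw [A3, A4, B2, B3, heq]

/-- Vertex element of the incidence poset. -/
def vert {n : ℕ} (v : Fin n) : IncPoset n := Sum.inl v

/-- Edge element of the incidence poset. -/
def edg {n : ℕ} (x z : Fin n) (h : x ≠ z) : IncPoset n :=
  Sum.inr ⟨{x, z}, Finset.card_pair h⟩

lemma vert_le_edg {n : ℕ} {v x z : Fin n} {h : x ≠ z} :
    vert v ≤ edg x z h ↔ v ∈ ({x, z} : Finset (Fin n)) := Iff.rfl

/-- The set of indices whose domain contains `u`. -/
noncomputable def sigF {X : Type*} {le : X → X → Prop} {t : ℕ} (L : Fin t → PLE le) (u : X) :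
    Finset (Fin t) :=
  @Finset.filter _ (fun i => u ∈ (L i).dom) (Classical.decPred _) Finset.univ

lemma mem_sigF {X : Type*} {le : X → X → Prop} {t : ℕ} {L : Fin t → PLE le} {u : X} {i : Fin t} :
    i ∈ sigF L u ↔ u ∈ (L i).dom :=
  ⟨fun h => ((@Finset.mem_filter _ _ (Classical.decPred _) _ _).1 h).2,
   fun h => (@Finset.mem_filter _ _ (Classical.decPred _) _ _).2 ⟨Finset.mem_univ i, h⟩⟩

lemma sigF_card_le {X : Type*} {le : X → X → Prop} {t : ℕ} {L : Fin t → PLE le} {d : ℕ}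
    (hw : WidthAtMost L d) (u : X) : (sigF L u).card ≤ d := by
  have h1 : ({i : Fin t | u ∈ (L i).dom}) = ↑(sigF L u) := by
    ext i
    simp only [Set.mem_setOf_eq, Finset.coe_sort_coe, Finset.mem_coe, mem_sigF]
  have := hw u
  rwa [h1, Set.ncard_coe_finset] at this

/-- Rank of an element in a finite set of indices. -/
def rkF {t : ℕ} (s : Finset (Fin t)) (i : Fin t) : ℕ := (s.filter (fun j => j < i)).card

lemma rkF_lt {t : ℕ} {s : Finset (Fin t)} {i : Fin t} (hi : i ∈ s) {d : ℕ} (hs : s.card ≤ d) :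
    rkF s i < d := by
  have hsub : s.filter (fun j => j < i) ⊆ s.erase i := by
    intro x hx
    rcases Finset.mem_filter.1 hx with ⟨h1, h2⟩
    exact Finset.mem_erase.2 ⟨ne_of_lt h2, h1⟩
  have h2 := Finset.card_le_card hsub
  rw [Finset.card_erase_of_mem hi] at h2
  have h3 : 1 ≤ s.card := Finset.card_pos.2 ⟨i, hi⟩
  unfold rkF
  omega

lemma rkF_mono {t : ℕ} {s : Finset (Fin t)} {i j : Fin t} (hi : i ∈ s) (hij : i < j) :
    rkF s i < rkF s j := by
  apply Finset.card_lt_card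
  constructor
  · intro x hx
    rcases Finset.mem_filter.1 hx with ⟨h1, h2⟩
    exact Finset.mem_filter.2 ⟨h1, lt_trans h2 hij⟩
  · intro hsub
    have : i ∈ s.filter (fun j' => j' < i) := hsub (Finset.mem_filter.2 ⟨hi, hij⟩)
    exact absurd (Finset.mem_filter.1 this).2 (lt_irrefl i)

lemma rkF_inj {t : ℕ} {s : Finset (Fin t)} {i j : Fin t} (hi : i ∈ s) (hj : j ∈ s)
    (h : rkF s i = rkF s j) : i = j := by
  rcases lt_trichotomy i j with hlt | he | hgt
  · exact absurd h (Nat.ne_of_lt (rkF_mono hi hlt))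
  · exact he
  · exact absurd h.symm (Nat.ne_of_lt (rkF_mono hj hgt))

lemma encode_inj {d r1 r2 r1' r2' : ℕ} (h1 : r2 < d) (h2 : r2' < d)
    (h : r1 * d + r2 = r1' * d + r2') : r1 = r1' ∧ r2 = r2' := by
  have hd : 0 < d := by omega
  have hx : (r1 * d + r2) % d = r2 := by
    rw [Nat.add_comm, Nat.mul_comm, Nat.add_mul_mod_self_left]; exact Nat.mod_eq_of_lt h1
  have hy : (r1' * d + r2') % d = r2' := by
    rw [Nat.add_comm, Nat.mul_comm, Nat.add_mul_mod_self_left]; exact Nat.mod_eq_of_lt h2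
  have e2 : r2 = r2' := by rw [← hx, ← hy, h]
  refine ⟨?_, e2⟩
  subst e2
  have : r1 * d = r1' * d := by omega
  exact Nat.eq_of_mul_eq_mul_right hd this

lemma cycle {X : Type*} {le : X → X → Prop} {t : ℕ} (L : Fin t → PLE le) {i j : Fin t}
    (hij : i = j) {eA eB v2 v3 : X} (hA : (L i).rel eA v2) (hB : (L j).rel eB v3)
    (h3A : le v3 eA) (h2B : le v2 eB) : v2 = v3 := by
  subst hij
  have hdv3 := (L i).mem_right _ _ hB
  have hdv2 := (L i).mem_right _ _ hA
  have hdeA := (L i).mem_left _ _ hA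
  have hdeB := (L i).mem_left _ _ hB
  have r1 : (L i).rel v3 v2 := (L i).trans _ _ _ ((L i).le_imp _ hdv3 _ hdeA h3A) hA
  have r2 : (L i).rel v2 v3 := (L i).trans _ _ _ ((L i).le_imp _ hdv2 _ hdeB h2B) hB
  exact (L i).antisymm _ _ r2 r1

set_option maxHeartbeats 1000000 in
lemma no_realizer (d n t : ℕ)
    (L : Fin t → PLE ((· ≤ ·) : IncPoset n → IncPoset n → Prop))
    (hreal : IsLocalRealizer L) (hwid : WidthAtMost L d)
    (hn3 : 3 ≤ n) (hnR : tripN (d * d) (pairN (d * d) (d * d + 3)) 0 ≤ n) : False := by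
  classical
  have hext : ∀ (x y z : Fin n) (hxz : x ≠ z), ¬ (y = x ∨ y = z) →
      ∃ i : Fin t, (L i).rel (edg x z hxz) (vert y) := by
    intro x y z hxz hy
    have hle : ¬ (vert y ≤ edg x z hxz) := by
      rw [vert_le_edg]
      simp only [Finset.mem_insert, Finset.mem_singleton]
      exact hy
    have h2 : ¬ ∀ i, ¬ ((L i).rel (edg x z hxz) (vert y) ∧ edg x z hxz ≠ vert y) :=
      fun hall => hle ((hreal (vert y) (edg x z hxz)).2 hall)
    push_neg at h2
    obtain ⟨i, hi, -⟩ := h2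
    exact ⟨i, hi⟩
  obtain ⟨i0, hi0⟩ := hext ⟨0, by omega⟩ ⟨1, by omega⟩ ⟨2, by omega⟩
    (by simp [Fin.ext_iff]) (by simp [Fin.ext_iff])
  haveI : Nonempty (Fin t) := ⟨i0⟩
  have hd1 : 1 ≤ d := by
    have hmem : i0 ∈ sigF L (vert (⟨1, by omega⟩ : Fin n)) :=
      mem_sigF.2 ((L i0).mem_right _ _ hi0)
    have h1 := sigF_card_le hwid (vert (⟨1, by omega⟩ : Fin n))
    have hpos : 0 < (sigF L (vert (⟨1, by omega⟩ : Fin n))).card :=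
      Finset.card_pos.2 ⟨i0, hmem⟩
    omega
  have hc : 0 < d * d := Nat.mul_pos hd1 hd1
  have hrev : ∀ x y z : ℕ, ∃ i : Fin t, ∀ (h : x < y ∧ y < z ∧ z < n),
      (L i).rel (edg ⟨x, by omega⟩ ⟨z, h.2.2⟩ (by simp only [ne_eq, Fin.mk.injEq]; omega))
        (vert ⟨y, by omega⟩) := by
    intro x y z
    by_cases h : x < y ∧ y < z ∧ z < n
    · obtain ⟨i, hi⟩ := hext ⟨x, by omega⟩ ⟨y, by omega⟩ ⟨z, h.2.2⟩
        (by simp only [ne_eq, Fin.mk.injEq]; omega)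
        (by simp only [Fin.mk.injEq]; omega)
      exact ⟨i, fun _ => hi⟩
    · exact ⟨Classical.arbitrary _, fun h' => absurd h' h⟩
  choose idx hidx using hrev
  set f : ℕ → ℕ → ℕ → ℕ := fun x y z =>
    if h : x < y ∧ y < z ∧ z < n then
      rkF (sigF L (vert ⟨y, by omega⟩)) (idx x y z) * d +
        rkF (sigF L (edg ⟨x, by omega⟩ ⟨z, h.2.2⟩
          (by simp only [ne_eq, Fin.mk.injEq]; omega))) (idx x y z)
    else 0 with hfdef
  have hfeq : ∀ x y z (h : x < y ∧ y < z ∧ z < n), f x y z =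
      rkF (sigF L (vert ⟨y, by omega⟩)) (idx x y z) * d +
        rkF (sigF L (edg ⟨x, by omega⟩ ⟨z, h.2.2⟩
          (by simp only [ne_eq, Fin.mk.injEq]; omega))) (idx x y z) := by
    intro x y z h
    rw [hfdef]
    exact dif_pos h
  have hf : ∀ x y z, f x y z < d * d := by
    intro x y z
    by_cases h : x < y ∧ y < z ∧ z < n
    · rw [hfeq x y z h]
      have hrel := hidx x y z h
      have hm1 : idx x y z ∈ sigF L (vert (⟨y, by omega⟩ : Fin n)) :=
        mem_sigF.2 ((L _).mem_right _ _ hrel)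
      have hm2 : idx x y z ∈ sigF L (edg (⟨x, by omega⟩ : Fin n) ⟨z, h.2.2⟩
          (by simp only [ne_eq, Fin.mk.injEq]; omega)) :=
        mem_sigF.2 ((L _).mem_left _ _ hrel)
      have hr1 := rkF_lt hm1 (sigF_card_le hwid _)
      have hr2 := rkF_lt hm2 (sigF_card_le hwid _)
      nlinarith
    · rw [hfdef]
      simp only [dif_neg h]
      exact hc
  obtain ⟨w1, w2, w3, w4, h12, h23, h34, h4n, E1, E2, E3⟩ := mono4 hc n hnR f hf
  have hT123 : w1 < w2 ∧ w2 < w3 ∧ w3 < n := ⟨h12, h23, by omega⟩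
  have hT124 : w1 < w2 ∧ w2 < w4 ∧ w4 < n := ⟨h12, by omega, h4n⟩
  have hT134 : w1 < w3 ∧ w3 < w4 ∧ w4 < n := ⟨by omega, h34, h4n⟩
  have hT234 : w2 < w3 ∧ w3 < w4 ∧ w4 < n := ⟨h23, h34, h4n⟩
  rw [hfeq w1 w2 w3 hT123, hfeq w1 w2 w4 hT124] at E1
  rw [hfeq w1 w2 w4 hT124, hfeq w1 w3 w4 hT134] at E2
  rw [hfeq w1 w3 w4 hT134, hfeq w2 w3 w4 hT234] at E3
  have hrel123 := hidx w1 w2 w3 hT123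
  have hrel124 := hidx w1 w2 w4 hT124
  have hrel134 := hidx w1 w3 w4 hT134
  have hrel234 := hidx w2 w3 w4 hT234
  have hm123v : idx w1 w2 w3 ∈ sigF L (vert (⟨w2, by omega⟩ : Fin n)) :=
    mem_sigF.2 ((L _).mem_right _ _ hrel123)
  have hm124v : idx w1 w2 w4 ∈ sigF L (vert (⟨w2, by omega⟩ : Fin n)) :=
    mem_sigF.2 ((L _).mem_right _ _ hrel124)
  have hm124e : idx w1 w2 w4 ∈ sigF L (edg (⟨w1, by omega⟩ : Fin n) ⟨w4, h4n⟩
      (by simp only [ne_eq, Fin.mk.injEq]; omega)) :=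
    mem_sigF.2 ((L _).mem_left _ _ hrel124)
  have hm134e : idx w1 w3 w4 ∈ sigF L (edg (⟨w1, by omega⟩ : Fin n) ⟨w4, h4n⟩
      (by simp only [ne_eq, Fin.mk.injEq]; omega)) :=
    mem_sigF.2 ((L _).mem_left _ _ hrel134)
  have hm134v : idx w1 w3 w4 ∈ sigF L (vert (⟨w3, by omega⟩ : Fin n)) :=
    mem_sigF.2 ((L _).mem_right _ _ hrel134)
  have hm234v : idx w2 w3 w4 ∈ sigF L (vert (⟨w3, by omega⟩ : Fin n)) :=
    mem_sigF.2 ((L _).mem_right _ _ hrel234)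
  have hb123e := rkF_lt (mem_sigF.2 ((L _).mem_left _ _ hrel123)) (sigF_card_le hwid _)
  have hb124e := rkF_lt hm124e (sigF_card_le hwid _)
  have hb134e := rkF_lt hm134e (sigF_card_le hwid _)
  have hb234e := rkF_lt (mem_sigF.2 ((L _).mem_left _ _ hrel234)) (sigF_card_le hwid _)
  obtain ⟨d1v, -⟩ := encode_inj hb123e hb124e E1
  obtain ⟨-, d2e⟩ := encode_inj hb124e hb134e E2
  obtain ⟨d3v, -⟩ := encode_inj hb134e hb234e E3
  have i12 : idx w1 w2 w3 = idx w1 w2 w4 := rkF_inj hm123v hm124v d1v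
  have i23 : idx w1 w2 w4 = idx w1 w3 w4 := rkF_inj hm124e hm134e d2e
  have i34 : idx w1 w3 w4 = idx w2 w3 w4 := rkF_inj hm134v hm234v d3v
  have hle3 : vert (⟨w3, by omega⟩ : Fin n) ≤ edg (⟨w1, by omega⟩ : Fin n) ⟨w3, by omega⟩
      (by simp only [ne_eq, Fin.mk.injEq]; omega) := by
    rw [vert_le_edg]; simp
  have hle2 : vert (⟨w2, by omega⟩ : Fin n) ≤ edg (⟨w2, by omega⟩ : Fin n) ⟨w4, h4n⟩
      (by simp only [ne_eq, Fin.mk.injEq]; omega) := by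
    rw [vert_le_edg]; simp
  have hveq := cycle L (i12.trans (i23.trans i34)) hrel123 hrel234 hle3 hle2
  have : w2 = w3 := congrArg Fin.val (Sum.inl.inj hveq)
  omega

lemma exists_realizer (n : ℕ) :
    ∃ (k t : ℕ) (L : Fin t → PLE ((· ≤ ·) : IncPoset n → IncPoset n → Prop)),
      IsLocalRealizer L ∧ WidthAtMost L k := by
  classical
  have key : ∀ a b : IncPoset n, ¬ a ≤ b →
      ∃ s : IncPoset n → IncPoset n → Prop, IsLinearOrder (IncPoset n) s ∧
        (∀ x y : IncPoset n, x ≤ y → s x y) ∧ s b a := by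
    intro a b hab
    set r' : IncPoset n → IncPoset n → Prop :=
      fun x y => x ≤ y ∨ (x ≤ b ∧ a ≤ y) with hr'
    haveI : IsPartialOrder (IncPoset n) r' := by
      refine { refl := ?_, trans := ?_, antisymm := ?_ }
      · intro x; exact Or.inl le_rfl
      · rintro x y z (hxy | ⟨h1, h2⟩) (hyz | ⟨h3, h4⟩)
        · exact Or.inl (hxy.trans hyz)
        · exact Or.inr ⟨hxy.trans h3, h4⟩
        · exact Or.inr ⟨h1, h2.trans hyz⟩
        · exact absurd (h2.trans h3) hab
      · rintro x y (hxy | ⟨h1, h2⟩) (hyx | ⟨h3, h4⟩)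
        · exact le_antisymm hxy hyx
        · exact absurd ((h4.trans hxy).trans h3) hab
        · exact absurd ((h2.trans hyx).trans h1) hab
        · exact absurd (h2.trans h3) hab
    obtain ⟨s, hs, hrs⟩ := extend_partialOrder r'
    exact ⟨s, hs, fun x y h => hrs _ _ (Or.inl h), hrs _ _ (Or.inr ⟨le_rfl, le_rfl⟩)⟩
  choose sfun hs1 hs2 hs3 using key
  set ι := {p : IncPoset n × IncPoset n // ¬ p.1 ≤ p.2} with hι
  set t := Fintype.card ι with ht
  set e : Fin t ≃ ι := (Fintype.equivFin ι).symm with he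
  set P : ι → PLE ((· ≤ ·) : IncPoset n → IncPoset n → Prop) := fun p =>
    { dom := Set.univ
      rel := sfun p.1.1 p.1.2 p.2
      mem_left := fun _ _ _ => trivial
      mem_right := fun _ _ _ => trivial
      refl := fun x _ => (hs1 p.1.1 p.1.2 p.2).1.1.1.refl x
      antisymm := fun x y hxy hyx => (hs1 p.1.1 p.1.2 p.2).1.2.antisymm x y hxy hyx
      trans := fun x y z hxy hyz => (hs1 p.1.1 p.1.2 p.2).1.1.2.trans x y z hxy hyz
      total := fun x _ y _ => (hs1 p.1.1 p.1.2 p.2).2.total x y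
      le_imp := fun x _ y _ hxy => hs2 p.1.1 p.1.2 p.2 x y hxy } with hP
  refine ⟨t, t, fun i => P (e i), ?_, ?_⟩
  · intro x y
    constructor
    · intro hxy i
      rintro ⟨hr, hne⟩
      have hx : (P (e i)).rel x y := hs2 _ _ _ x y hxy
      have : y = x := (hs1 _ _ _).1.2.antisymm y x hr hx
      exact hne this
    · intro hall
      by_contra hxy
      have := hall (e.symm ⟨(x, y), hxy⟩)
      apply this
      constructor
      · show (P (e (e.symm ⟨(x, y), hxy⟩))).rel y x
        rw [Equiv.apply_symm_apply]
        exact hs3 x y hxy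
      · intro h
        rw [h] at hxy
        exact hxy le_rfl
  · intro x
    have hset : {i : Fin t | x ∈ ((fun i => P (e i)) i).dom} = Set.univ := by
      ext i; simp [hP]
    rw [hset, Set.ncard_univ]
    simp [Nat.card_eq_fintype_card]


/-- For every `d` there exists `n₀` such that for all `n ≥ n₀`, the
incidence poset `P_n` of the complete graph on `n` vertices has local dimension
greater than `d`; i.e. the local dimension of `P_n` tends to infinity. -/
theorem local_dim_incidence_poset_unbounded (d : ℕ) :
    ∃ n₀ : ℕ, ∀ n : ℕ, n₀ ≤ n → d < localDim (IncPoset n) := by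
  refine ⟨max 3 (tripN (d * d) (pairN (d * d) (d * d + 3)) 0), fun n hn => ?_⟩
  have hn3 : 3 ≤ n := le_trans (le_max_left _ _) hn
  have hnR : tripN (d * d) (pairN (d * d) (d * d + 3)) 0 ≤ n := le_trans (le_max_right _ _) hn
  obtain ⟨k, t0, L0, hre0, hw0⟩ := exists_realizer n
  have hne : {d' : ℕ | ∃ (t : ℕ) (L : Fin t → PLE ((· ≤ ·) : IncPoset n → IncPoset n → Prop)),
      IsLocalRealizer L ∧ WidthAtMost L d'}.Nonempty := ⟨k, t0, L0, hre0, hw0⟩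
  have hloc : localDim (IncPoset n) = sInf {d' : ℕ | ∃ (t : ℕ)
      (L : Fin t → PLE ((· ≤ ·) : IncPoset n → IncPoset n → Prop)),
      IsLocalRealizer L ∧ WidthAtMost L d'} := rfl
  rw [hloc]
  by_contra hcon
  push_neg at hcon
  obtain ⟨t, L, hre, hw⟩ := Nat.sInf_mem hne
  have hwd : WidthAtMost L d := fun x => le_trans (hw x) hcon
  exact no_realizer d n t L hre hwd hn3 hnR
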